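/- arXiv:2012.03412 — 2 statements merged into one kernel-verified Lean document; each statement's English description precedes it below -/
import Mathlib

section
/- (Convolution identity for the coefficients \chi) Let \chi_n(k) be the coefficient of (ps)^k in f_n(s) as above. Then for all 1 \le m \le n-1: 2(2^m - 1) \chi_n(m) = \sum_{i+j=m-1, i,j \ge 0} \sum_{k=1}^{n-1} binom(n,k) \chi_k(i) \chi_{n-k}(j). -/
open PowerSeries Finset
noncomputable section

/-- Coefficient-wise composition `f ∘ g` of formal power series; this agrees with the
usual composition when `g` has zero constant term. -/
def scomp (f g : PowerSeries ℂ) : PowerSeries ℂ :=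
  PowerSeries.mk fun N => ∑ n ∈ Finset.range (N + 1),
    (PowerSeries.coeff n f) * (PowerSeries.coeff N (g ^ n))

/-- The exponential series `∑ t^n/n!`. -/
def expS : PowerSeries ℂ := PowerSeries.mk fun n => 1 / (n.factorial : ℂ)

/-- The series `log(1+t) = ∑_{n≥1} (-1)^{n+1} t^n / n`. -/
def logS : PowerSeries ℂ := PowerSeries.mk fun n => if n = 0 then 0 else (-1) ^ (n + 1) / (n : ℂ)

/-- Complex power `φ^q := exp (q · log φ)`, well defined when `φ` has constant term 1. -/
def cpow (φ : PowerSeries ℂ) (q : ℂ) : PowerSeries ℂ :=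
  scomp expS (q • scomp logS (φ - 1))

/-- Formal derivative. -/
def D (f : PowerSeries ℂ) : PowerSeries ℂ :=
  PowerSeries.mk fun n => ((n + 1 : ℕ) : ℂ) * PowerSeries.coeff (n + 1) f

/-- Generalized binomial coefficient `binom(t, k) = t(t-1)⋯(t-k+1)/k!`. -/
def gbinom (t : ℂ) (k : ℕ) : ℂ := (∏ j ∈ Finset.range k, (t - j)) / (k.factorial : ℂ)

/-- The ordinary Bell polynomial `B_{n,k}(x_1, …, x_{n-k+1})`. -/
def ordBell (n k : ℕ) (x : ℕ → ℂ) : ℂ :=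
  ∑ i : Fin (n - k + 1) → Fin (n + 1),
    if (∑ j, (i j : ℕ)) = k ∧ (∑ j, (j.1 + 1) * (i j : ℕ)) = n then
      ((k.factorial : ℂ) / ∏ j, ((i j : ℕ).factorial : ℂ)) * ∏ j, x (j.1 + 1) ^ (i j : ℕ)
    else 0

/-- Convolution identity:
`2(2^m - 1) χ_n(m) = ∑_{i+j=m-1} ∑_{k=1}^{n-1} binom(n,k) χ_k(i) χ_{n-k}(j)`. -/
theorem stmt17 (p c₁ : ℂ) (hp : p ≠ 0) (hc₁ : c₁ ≠ 0)
    (lam : ℕ → ℂ → ℂ) (hlam0 : ∀ s : ℂ, lam 0 s = 1)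
    (hadd : ∀ (a b : ℂ) (n : ℕ),
      lam n (a + b) = ∑ k ∈ Finset.range (n + 1), lam k a * lam (n - k) b)
    (f : ℕ → ℂ → ℂ)
    (hf : ∀ n : ℕ, 1 ≤ n → ∀ s : ℂ,
      lam n s = p * s / ((n.factorial : ℂ) * (-c₁) ^ n) * f n s)
    (χ : ℕ → ℕ → ℂ)
    (hχ : ∀ n : ℕ, 1 ≤ n → ∀ s : ℂ,
      f n s = ∑ k ∈ Finset.range n, χ n k * (p * s) ^ k)
    (hχ0 : ∀ n k : ℕ, n ≤ k → χ n k = 0) :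
    ∀ n m : ℕ, 1 ≤ m → m ≤ n - 1 →
      2 * ((2 : ℂ) ^ m - 1) * χ n m =
        ∑ ij ∈ Finset.HasAntidiagonal.antidiagonal (m - 1),
          ∑ k ∈ Finset.Icc 1 (n - 1), (n.choose k : ℂ) * χ k ij.1 * χ (n - k) ij.2 := by
  intro n m hm1 hm2
  have hn2 : 2 ≤ n := by omega
  -- polynomials
  set Q : ℕ → Polynomial ℂ :=
    fun k => ∑ i ∈ range n, Polynomial.C (χ k i) * Polynomial.X ^ i with hQ
  have hQcoeff : ∀ k, k ≤ n → ∀ i, (Q k).coeff i = χ k i := by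
    intro k hk i
    simp only [hQ, Polynomial.finset_sum_coeff, Polynomial.coeff_C_mul,
      Polynomial.coeff_X_pow, mul_ite, mul_one, mul_zero]
    rw [Finset.sum_ite_eq (range n) i (fun j => χ k j)]
    by_cases h : i ∈ range n
    · simp [h]
    · simp only [h, if_false]
      exact (hχ0 k i (by simp at h; omega)).symm
  have hQeval : ∀ k, ∀ y : ℂ, (Q k).eval y = ∑ i ∈ range n, χ k i * y ^ i := by
    intro k y; simp [hQ, Polynomial.eval_finset_sum]
  have hQf : ∀ k, 1 ≤ k → k ≤ n → ∀ t : ℂ, f k t = (Q k).eval (p * t) := by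
    intro k hk1 hkn t
    rw [hχ k hk1 t, hQeval]
    apply Finset.sum_subset
    · exact Finset.range_subset_range.2 hkn
    · intro i _ hi
      rw [hχ0 k i (by simp at hi; omega), zero_mul]
  set A : Polynomial ℂ :=
    ∑ j ∈ range n, Polynomial.C (2 * ((2:ℂ) ^ j - 1) * χ n j) * Polynomial.X ^ j with hA
  set B : Polynomial ℂ :=
    (∑ k ∈ Icc 1 (n-1), Polynomial.C ((n.choose k : ℂ)) * (Q k * Q (n - k))) * Polynomial.X
    with hB
  -- scalar identity
  have heval : ∀ s : ℂ, s ≠ 0 → A.eval (p * s) = B.eval (p * s) := by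
    intro s hs
    set x : ℂ := p * s with hxdef
    have hx : x ≠ 0 := mul_ne_zero hp hs
    set c : ℂ := x / ((n.factorial : ℂ) * (-c₁) ^ n) with hc
    have hfac : ((n.factorial : ℕ) : ℂ) ≠ 0 := Nat.cast_ne_zero.2 n.factorial_ne_zero
    have hcne : c ≠ 0 := by
      apply div_ne_zero hx
      exact mul_ne_zero hfac (pow_ne_zero _ (neg_ne_zero.2 hc₁))
    apply mul_left_cancel₀ hcne
    -- key identity from additivity
    have key : lam n (s + s) - 2 * lam n s = ∑ k ∈ Icc 1 (n-1), lam k s * lam (n-k) s := by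
      rw [hadd s s n]
      have hsplit : ∑ k ∈ range (n+1), lam k s * lam (n-k) s
          = lam 0 s * lam (n-0) s + (∑ k ∈ Icc 1 (n-1), lam k s * lam (n-k) s)
            + lam n s * lam (n-n) s := by
        rw [Finset.sum_range_succ, Finset.range_eq_Ico,
          Finset.sum_eq_sum_Ico_succ_bot (by omega : 0 < n)]
        have : Finset.Ico 1 n = Finset.Icc 1 (n-1) := by
          rw [← Finset.Ico_add_one_right_eq_Icc]; congr 1; omega
        rw [this]
      rw [hsplit, hlam0, Nat.sub_self, Nat.sub_zero, hlam0]
      ring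
    have hlamn2 : lam n (s+s) = c * (2 * (Q n).eval (2*x)) := by
      rw [hf n (by omega) (s+s), hQf n (by omega) le_rfl (s+s)]
      have h1 : p * (s + s) = 2 * x := by rw [hxdef]; ring
      rw [h1, hc]; try ring
    have hlamn1 : lam n s = c * (Q n).eval x := by
      rw [hf n (by omega) s, hQf n (by omega) le_rfl s, ← hxdef, hc]; try ring
    have hterm : ∀ k ∈ Icc 1 (n-1),
        lam k s * lam (n-k) s
          = c * (((n.choose k : ℂ)) * ((Q k).eval x * (Q (n-k)).eval x) * x) := by
      intro k hk
      simp only [Finset.mem_Icc] at hk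
      have hk1 : 1 ≤ k := hk.1
      have hkn : k ≤ n := by omega
      have hnk1 : 1 ≤ n - k := by omega
      rw [hf k hk1 s, hf (n-k) hnk1 s, hQf k hk1 hkn s, hQf (n-k) hnk1 (by omega) s, ← hxdef]
      have hkfac : ((k.factorial : ℕ) : ℂ) ≠ 0 := Nat.cast_ne_zero.2 k.factorial_ne_zero
      have hnkfac : (((n-k).factorial : ℕ) : ℂ) ≠ 0 := Nat.cast_ne_zero.2 (n-k).factorial_ne_zero
      have hfacn : ((n.factorial : ℕ) : ℂ) ≠ 0 := Nat.cast_ne_zero.2 n.factorial_ne_zero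
      have hch : (n.choose k : ℂ) = (n.factorial : ℂ) / ((k.factorial : ℂ) * ((n-k).factorial : ℂ)) :=
        Nat.cast_choose ℂ hkn
      have hpow : (-c₁ : ℂ) ^ n = (-c₁) ^ k * (-c₁) ^ (n-k) := by
        rw [← pow_add, Nat.add_sub_cancel' hkn]
      rw [hc, hch, hpow]
      generalize hgen : (-c₁ : ℂ) = d
      have hd : d ≠ 0 := by rw [← hgen]; exact neg_ne_zero.2 hc₁
      field_simp
    have hAe : A.eval x = 2 * (Q n).eval (2*x) - 2 * (Q n).eval x := by
      rw [hA, Polynomial.eval_finset_sum, hQeval, hQeval]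
      simp only [Polynomial.eval_mul, Polynomial.eval_C, Polynomial.eval_pow, Polynomial.eval_X]
      rw [Finset.mul_sum, Finset.mul_sum, ← Finset.sum_sub_distrib]
      apply Finset.sum_congr rfl
      intro j _
      rw [mul_pow]
      try ring
    have hBe : B.eval x = ∑ k ∈ Icc 1 (n-1),
        ((n.choose k : ℂ)) * ((Q k).eval x * (Q (n-k)).eval x) * x := by
      rw [hB]
      simp only [Polynomial.eval_mul, Polynomial.eval_finset_sum, Polynomial.eval_C,
        Polynomial.eval_X, Finset.sum_mul]
      try (apply Finset.sum_congr rfl; intro k _; ring)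
    rw [hAe, hBe, Finset.mul_sum]
    rw [← Finset.sum_congr rfl hterm, ← key, hlamn2, hlamn1]
    ring
  -- polynomial equality
  have hAB : A = B := by
    have hroot : {x : ℂ | x ∈ ({0} : Set ℂ)ᶜ} ⊆ {x | (A - B).IsRoot x} := by
      intro y hy
      simp only [Set.mem_compl_iff, Set.mem_singleton_iff] at hy
      have hs : (y / p : ℂ) ≠ 0 := div_ne_zero hy hp
      have := heval (y/p) hs
      rw [mul_div_cancel₀ y hp] at this
      simp [Polynomial.IsRoot, this]
    have hinf : ({0} : Set ℂ)ᶜ.Infinite := (Set.finite_singleton 0).infinite_compl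
    have := Polynomial.eq_zero_of_infinite_isRoot (A - B) (hinf.mono hroot)
    exact sub_eq_zero.1 this
  -- compare coefficient m
  have hcoeff := congrArg (fun P => Polynomial.coeff P m) hAB
  obtain ⟨m', rfl⟩ : ∃ m', m = m' + 1 := ⟨m - 1, by omega⟩
  have hAc : A.coeff (m'+1) = 2 * ((2:ℂ) ^ (m'+1) - 1) * χ n (m'+1) := by
    simp only [hA, Polynomial.finset_sum_coeff, Polynomial.coeff_C_mul,
      Polynomial.coeff_X_pow, mul_ite, mul_one, mul_zero]
    rw [Finset.sum_ite_eq (range n) (m'+1) (fun j => 2*((2:ℂ)^j-1)*χ n j)]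
    simp [Finset.mem_range.2 (by omega : m'+1 < n)]
  have hBc : B.coeff (m'+1) = ∑ k ∈ Icc 1 (n-1), ∑ ij ∈ Finset.HasAntidiagonal.antidiagonal m',
      (n.choose k : ℂ) * χ k ij.1 * χ (n-k) ij.2 := by
    rw [hB, Polynomial.coeff_mul_X, Polynomial.finset_sum_coeff]
    apply Finset.sum_congr rfl
    intro k hk
    simp only [Finset.mem_Icc] at hk
    rw [Polynomial.coeff_C_mul, Polynomial.coeff_mul, Finset.mul_sum]
    apply Finset.sum_congr rfl
    intro ij _
    rw [hQcoeff k (by omega), hQcoeff (n-k) (by omega)]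
    ring
  rw [hAc, hBc] at hcoeff
  simp only [Nat.add_sub_cancel]
  rw [hcoeff, Finset.sum_comm]
end
end

section
/- (Second convolution identity) With the same \chi_n(k) as above, for all 1 \le m \le n-1: (m+1) \chi_n(m) = \sum_{k=m}^{n-1} binom(n,k) \chi_k(m-1) \chi_{n-k}(0). -/
open PowerSeries Finset
noncomputable section

/-- Second convolution identity:
`(m+1) χ_n(m) = ∑_{k=m}^{n-1} binom(n,k) χ_k(m-1) χ_{n-k}(0)`. -/
theorem stmt18 (p c₁ : ℂ) (hp : p ≠ 0) (hc₁ : c₁ ≠ 0)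
    (lam : ℕ → ℂ → ℂ) (hlam0 : ∀ s : ℂ, lam 0 s = 1)
    (hadd : ∀ (a b : ℂ) (n : ℕ),
      lam n (a + b) = ∑ k ∈ Finset.range (n + 1), lam k a * lam (n - k) b)
    (f : ℕ → ℂ → ℂ)
    (hf : ∀ n : ℕ, 1 ≤ n → ∀ s : ℂ,
      lam n s = p * s / ((n.factorial : ℂ) * (-c₁) ^ n) * f n s)
    (χ : ℕ → ℕ → ℂ)
    (hχ : ∀ n : ℕ, 1 ≤ n → ∀ s : ℂ,
      f n s = ∑ k ∈ Finset.range n, χ n k * (p * s) ^ k)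
    (hχ0 : ∀ n k : ℕ, n ≤ k → χ n k = 0) :
    ∀ n m : ℕ, 1 ≤ m → m ≤ n - 1 →
      ((m : ℂ) + 1) * χ n m =
        ∑ k ∈ Finset.Icc m (n - 1), (n.choose k : ℂ) * χ k (m - 1) * χ (n - k) 0 := by
  classical
  intro n m hm hmn
  have hn2 : 2 ≤ n := by omega
  -- the denominators
  set Dn : ℕ → ℂ := fun N => (N.factorial : ℂ) * (-c₁) ^ N with hDn
  have hDne : ∀ N, Dn N ≠ 0 := fun N =>
    mul_ne_zero (Nat.cast_ne_zero.mpr N.factorial_ne_zero)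
      (pow_ne_zero _ (neg_ne_zero.mpr hc₁))
  -- polynomial models of lam
  set L : ℕ → Polynomial ℂ := fun N =>
    if N = 0 then 1 else
      ∑ k ∈ Finset.range N, Polynomial.C (p ^ (k + 1) * χ N k / Dn N) * Polynomial.X ^ (k + 1)
    with hLdef
  have hLeval : ∀ (N : ℕ) (s : ℂ), Polynomial.eval s (L N) = lam N s := by
    intro N s
    rcases Nat.eq_zero_or_pos N with h0 | h1
    · subst h0; simp [hLdef, hlam0]
    · rw [hf N h1 s, hχ N h1 s]
      simp only [hLdef, if_neg (Nat.pos_iff_ne_zero.mp h1)]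
      rw [Polynomial.eval_finset_sum, Finset.mul_sum]
      refine Finset.sum_congr rfl fun k _ => ?_
      simp only [Polynomial.eval_mul, Polynomial.eval_C, Polynomial.eval_pow, Polynomial.eval_X]
      rw [mul_pow]
      ring
  have hcoeff : ∀ N, 1 ≤ N → ∀ j, 1 ≤ j →
      (L N).coeff j = p ^ j * χ N (j - 1) / Dn N := by
    intro N hN j hj
    simp only [hLdef, if_neg (by omega : ¬ N = 0)]
    rw [Polynomial.finset_sum_coeff]
    simp only [Polynomial.coeff_C_mul, Polynomial.coeff_X_pow]
    by_cases h : j - 1 < N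
    · rw [Finset.sum_eq_single (j - 1)]
      · rw [if_pos (by omega : j = j - 1 + 1), mul_one, (by omega : j - 1 + 1 = j)]
      · intro b _ hb
        rw [if_neg (by omega : ¬ j = b + 1), mul_zero]
      · intro habs
        exact absurd (Finset.mem_range.mpr h) habs
    · rw [Finset.sum_eq_zero, hχ0 N (j - 1) (by omega), mul_zero, zero_div]
      intro b hb
      have hb' := Finset.mem_range.mp hb
      rw [if_neg (by omega : ¬ j = b + 1), mul_zero]
  have hL0coeff : ∀ j, 1 ≤ j → (L 0).coeff j = 0 := by
    intro j hj
    simp only [hLdef, if_pos rfl, Polynomial.coeff_one, if_neg (by omega : ¬ j = 0)]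
  -- Step A: for each a, polynomial identity in b
  have hstepA : ∀ a : ℂ, (L n).comp (Polynomial.X + Polynomial.C a)
      = ∑ k ∈ Finset.range (n + 1), Polynomial.C (lam k a) * L (n - k) := by
    intro a
    apply Polynomial.funext
    intro b
    rw [Polynomial.eval_comp]
    simp only [Polynomial.eval_add, Polynomial.eval_X, Polynomial.eval_C]
    rw [hLeval n (b + a), add_comm b a, hadd a b n, Polynomial.eval_finset_sum]
    simp only [Polynomial.eval_mul, Polynomial.eval_C, hLeval]
  -- Step B: derivative identity
  have hstepB : Polynomial.derivative (L n)
      = ∑ k ∈ Finset.range (n + 1), Polynomial.C ((L (n - k)).coeff 1) * L k := by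
    apply Polynomial.funext
    intro a
    have h1 := congrArg (fun q : Polynomial ℂ => q.coeff 1) (hstepA a)
    rw [← Polynomial.taylor_apply, Polynomial.taylor_coeff_one,
      Polynomial.finset_sum_coeff] at h1
    simp only [Polynomial.coeff_C_mul] at h1
    rw [Polynomial.eval_finset_sum]
    simp only [Polynomial.eval_mul, Polynomial.eval_C, hLeval]
    rw [h1]
    exact Finset.sum_congr rfl fun k _ => mul_comm _ _
  -- extract coefficient m
  have hkey := congrArg (fun q : Polynomial ℂ => q.coeff m) hstepB
  rw [Polynomial.coeff_derivative, Polynomial.finset_sum_coeff] at hkey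
  simp only [Polynomial.coeff_C_mul] at hkey
  -- rewrite the sum on the right of hkey
  have hsub : Finset.Icc m (n - 1) ⊆ Finset.range (n + 1) := by
    intro k hk
    rw [Finset.mem_Icc] at hk
    exact Finset.mem_range.mpr (by omega)
  have hvanish : ∀ k ∈ Finset.range (n + 1), k ∉ Finset.Icc m (n - 1) →
      (L (n - k)).coeff 1 * (L k).coeff m = 0 := by
    intro k hk hk'
    rw [Finset.mem_range] at hk
    rw [Finset.mem_Icc] at hk'
    push_neg at hk'
    by_cases hkm : k < m
    · rcases Nat.eq_zero_or_pos k with h0 | h1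
      · subst h0
        rw [hL0coeff m hm, mul_zero]
      · rw [hcoeff k h1 m hm, hχ0 k (m - 1) (by omega), mul_zero, zero_div, mul_zero]
    · have hkn : k = n := by omega
      subst hkn
      rw [Nat.sub_self, hL0coeff 1 le_rfl, zero_mul]
  have hmatch : ∀ k ∈ Finset.Icc m (n - 1),
      (L (n - k)).coeff 1 * (L k).coeff m
        = p ^ (m + 1) / Dn n * ((n.choose k : ℂ) * χ k (m - 1) * χ (n - k) 0) := by
    intro k hk
    rw [Finset.mem_Icc] at hk
    have hk1 : 1 ≤ k := by omega
    have hkn : k ≤ n := by omega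
    have hnk1 : 1 ≤ n - k := by omega
    rw [hcoeff (n - k) hnk1 1 le_rfl, hcoeff k hk1 m hm]
    have hpow : (-c₁) ^ k * (-c₁) ^ (n - k) = (-c₁) ^ n := by
      rw [← pow_add]
      congr 1
      omega
    simp only [hDn, pow_one]
    have hfact : (n.factorial : ℂ)
        = (n.choose k : ℂ) * (k.factorial : ℂ) * ((n - k).factorial : ℂ) := by
      exact_mod_cast (Nat.choose_mul_factorial_mul_factorial hkn).symm
    have hfk : (k.factorial : ℂ) ≠ 0 := Nat.cast_ne_zero.mpr k.factorial_ne_zero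
    have hfnk : ((n - k).factorial : ℂ) ≠ 0 := Nat.cast_ne_zero.mpr (n - k).factorial_ne_zero
    have hchne : (n.choose k : ℂ) ≠ 0 := Nat.cast_ne_zero.mpr (Nat.choose_pos hkn).ne'
    have hcne : (-c₁ : ℂ) ≠ 0 := neg_ne_zero.mpr hc₁
    have hune : (-c₁ : ℂ) ^ k ≠ 0 := pow_ne_zero _ hcne
    have hvne : (-c₁ : ℂ) ^ (n - k) ≠ 0 := pow_ne_zero _ hcne
    rw [hfact, ← hpow]
    field_simp
    ring
  rw [← Finset.sum_subset hsub hvanish, Finset.sum_congr rfl hmatch] at hkey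
  -- finish: cancel p^(m+1)/Dn n
  have hLn : (L n).coeff (m + 1) = p ^ (m + 1) * χ n m / Dn n := by
    rw [hcoeff n (by omega) (m + 1) (by omega)]
    simp
  rw [hLn, ← Finset.mul_sum] at hkey
  have hne : p ^ (m + 1) / Dn n ≠ 0 := div_ne_zero (pow_ne_zero _ hp) (hDne n)
  apply mul_left_cancel₀ hne
  rw [← hkey]
  ring
end
end
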